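/- arXiv:1605.06296 — 9 statements merged into one kernel-verified Lean document; each statement's English description precedes it below -/
import Mathlib

section
/- Let η ∈ [0,1] and let p, p_l, p_r ∈ [0,1] and a ∈ [0,1]. Writing x^η = (1-2η)x + η and G(x) = 2x(1-x), the Gini gain computed on noisy fractions equals (1-2η)² times the noise-free Gini gain: [G(p^η) - a·G(p_l^η) - (1-a)·G(p_r^η)] = (1-2η)²·[G(p) - a·G(p_l) - (1-a)·G(p_r)]. -/
/-- The Gini gain computed on noisy fractions equals `(1-2η)²` times the noise-free
Gini gain, where `x^η = (1-2η)x + η` and `G(x) = 2x(1-x)`. -/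
theorem gini_noisy_gain (η p pl pr a : ℝ)
    (hη : η ∈ Set.Icc (0:ℝ) 1) (hp : p ∈ Set.Icc (0:ℝ) 1)
    (hpl : pl ∈ Set.Icc (0:ℝ) 1) (hpr : pr ∈ Set.Icc (0:ℝ) 1)
    (ha : a ∈ Set.Icc (0:ℝ) 1)
    (noisy : ℝ → ℝ) (hnoisy : ∀ x, noisy x = (1 - 2*η)*x + η)
    (G : ℝ → ℝ) (hG : ∀ x, G x = 2 * x * (1 - x)) :
    G (noisy p) - a * G (noisy pl) - (1 - a) * G (noisy pr) =
      (1 - 2*η)^2 * (G p - a * G pl - (1 - a) * G pr) := by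
  simp only [hnoisy, hG]; ring
end

section
/- (Theorem 3, Gini part.) Let η ∈ [0,1] with η ≠ 1/2, let p ∈ [0,1] be the parent positive fraction, and consider two splits f₁ = (a₁, p_{l1}, p_{r1}) and f₂ = (a₂, p_{l2}, p_{r2}) with all entries in [0,1]. Writing x^η = (1-2η)x + η and G(x) = 2x(1-x), the Gini gain of f₁ exceeds that of f₂ on noise-free fractions if and only if the Gini gain of f₁ exceeds that of f₂ on the noisy fractions, i.e. G(p)-a₁G(p_{l1})-(1-a₁)G(p_{r1}) > G(p)-a₂G(p_{l2})-(1-a₂)G(p_{r2}) if and only if G(p^η)-a₁G(p_{l1}^η)-(1-a₁)G(p_{r1}^η) > G(p^η)-a₂G(p_{l2}^η)-(1-a₂)G(p_{r2}^η). Hence the maximizers of Gini gain under symmetric label noise coincide with those under noise-free data. -/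
/-- Theorem 3 (Gini part): for `η ≠ 1/2`, the Gini gain of split `f₁` exceeds that of `f₂`
on noise-free fractions iff it does on the noisy fractions `x^η = (1-2η)x + η`. -/
theorem gini_gain_noise_tolerant (η p : ℝ)
    (hη : η ∈ Set.Icc (0:ℝ) 1) (hη2 : η ≠ 1/2) (hp : p ∈ Set.Icc (0:ℝ) 1)
    (a₁ pl₁ pr₁ a₂ pl₂ pr₂ : ℝ)
    (ha₁ : a₁ ∈ Set.Icc (0:ℝ) 1) (hpl₁ : pl₁ ∈ Set.Icc (0:ℝ) 1) (hpr₁ : pr₁ ∈ Set.Icc (0:ℝ) 1)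
    (ha₂ : a₂ ∈ Set.Icc (0:ℝ) 1) (hpl₂ : pl₂ ∈ Set.Icc (0:ℝ) 1) (hpr₂ : pr₂ ∈ Set.Icc (0:ℝ) 1)
    (noisy : ℝ → ℝ) (hnoisy : ∀ x, noisy x = (1 - 2*η)*x + η)
    (G : ℝ → ℝ) (hG : ∀ x, G x = 2 * x * (1 - x)) :
    (G p - a₁ * G pl₁ - (1 - a₁) * G pr₁ > G p - a₂ * G pl₂ - (1 - a₂) * G pr₂) ↔
    (G (noisy p) - a₁ * G (noisy pl₁) - (1 - a₁) * G (noisy pr₁) >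
      G (noisy p) - a₂ * G (noisy pl₂) - (1 - a₂) * G (noisy pr₂)) := by
  have hc : (1 - 2*η) ≠ 0 := by
    intro h; apply hη2; linarith
  have hc2 : 0 < (1 - 2*η)^2 := by positivity
  have key : (G (noisy p) - a₁ * G (noisy pl₁) - (1 - a₁) * G (noisy pr₁)) -
      (G (noisy p) - a₂ * G (noisy pl₂) - (1 - a₂) * G (noisy pr₂)) =
      (1 - 2*η)^2 * ((G p - a₁ * G pl₁ - (1 - a₁) * G pr₁) -
      (G p - a₂ * G pl₂ - (1 - a₂) * G pr₂)) := by
    simp only [hnoisy, hG]; ring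
  constructor <;> intro h
  · nlinarith [key]
  · nlinarith [key]
end

section
/- Let η ∈ [0,1] with η < 1/2, and let p, p_l, p_r ∈ [0,1], a ∈ [0,1]. Writing x^η = (1-2η)x + η and G_MC(x) = min{x, 1-x}, the misclassification gain on noisy fractions equals (1-2η) times the noise-free gain: [G_MC(p^η) - a·G_MC(p_l^η) - (1-a)·G_MC(p_r^η)] = (1-2η)·[G_MC(p) - a·G_MC(p_l) - (1-a)·G_MC(p_r)]. -/
/-- For `η < 1/2`, the misclassification gain on noisy fractions `x^η = (1-2η)x + η`
equals `(1-2η)` times the noise-free misclassification gain, where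
`G_MC(x) = min{x, 1-x}`. -/
theorem mc_noisy_gain (η p pl pr a : ℝ)
    (hη : η ∈ Set.Icc (0:ℝ) 1) (hη2 : η < 1/2) (hp : p ∈ Set.Icc (0:ℝ) 1)
    (hpl : pl ∈ Set.Icc (0:ℝ) 1) (hpr : pr ∈ Set.Icc (0:ℝ) 1)
    (ha : a ∈ Set.Icc (0:ℝ) 1)
    (noisy : ℝ → ℝ) (hnoisy : ∀ x, noisy x = (1 - 2*η)*x + η)
    (Gmc : ℝ → ℝ) (hGmc : ∀ x, Gmc x = min x (1 - x)) :
    Gmc (noisy p) - a * Gmc (noisy pl) - (1 - a) * Gmc (noisy pr) =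
      (1 - 2*η) * (Gmc p - a * Gmc pl - (1 - a) * Gmc pr) := by
  have hc : (0:ℝ) ≤ 1 - 2*η := by linarith
  have key : ∀ x, Gmc (noisy x) = (1 - 2*η) * Gmc x + η := by
    intro x
    rw [hGmc, hGmc, hnoisy]
    have h1 : 1 - ((1 - 2*η)*x + η) = (1 - 2*η)*(1-x) + η := by ring
    rw [h1]
    rcases le_total x (1-x) with h | h
    · rw [min_eq_left h, min_eq_left (by nlinarith)]
    · rw [min_eq_right h, min_eq_right (by nlinarith)]
  rw [key, key, key]; ring
end

section
/- Let η ∈ [0,1] with η > 1/2, and let p, p_l, p_r ∈ [0,1], a ∈ [0,1]. Writing x^η = (1-2η)x + η and G_MC(x) = min{x, 1-x}, the misclassification gain on noisy fractions equals (2η-1) times the noise-free gain: [G_MC(p^η) - a·G_MC(p_l^η) - (1-a)·G_MC(p_r^η)] = (2η-1)·[G_MC(p) - a·G_MC(p_l) - (1-a)·G_MC(p_r)]. -/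
/-- For `η > 1/2`, the misclassification gain on noisy fractions `x^η = (1-2η)x + η`
equals `(2η-1)` times the noise-free misclassification gain, where
`G_MC(x) = min{x, 1-x}`. -/
theorem mc_noisy_gain_highNoise (η p pl pr a : ℝ)
    (hη : η ∈ Set.Icc (0:ℝ) 1) (hη2 : η > 1/2) (hp : p ∈ Set.Icc (0:ℝ) 1)
    (hpl : pl ∈ Set.Icc (0:ℝ) 1) (hpr : pr ∈ Set.Icc (0:ℝ) 1)
    (ha : a ∈ Set.Icc (0:ℝ) 1)
    (noisy : ℝ → ℝ) (hnoisy : ∀ x, noisy x = (1 - 2*η)*x + η)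
    (Gmc : ℝ → ℝ) (hGmc : ∀ x, Gmc x = min x (1 - x)) :
    Gmc (noisy p) - a * Gmc (noisy pl) - (1 - a) * Gmc (noisy pr) =
      (2*η - 1) * (Gmc p - a * Gmc pl - (1 - a) * Gmc pr) := by
  have key : ∀ x : ℝ, Gmc (noisy x) = (2*η - 1) * Gmc x + (1 - η) := by
    intro x
    rw [hGmc, hGmc, hnoisy]
    rcases le_total x (1/2) with hx | hx
    · rw [min_eq_right (by nlinarith), min_eq_left (by linarith)]
      ring
    · rw [min_eq_left (by nlinarith), min_eq_right (by linarith)]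
      ring
  rw [key, key, key]
  ring
end

section
/- (Theorem 3, misclassification part.) Let η ∈ [0,1] with η ≠ 1/2, let p ∈ [0,1], and consider two splits f₁ = (a₁, p_{l1}, p_{r1}) and f₂ = (a₂, p_{l2}, p_{r2}) with all entries in [0,1]. Writing x^η = (1-2η)x + η and G_MC(x) = min{x, 1-x}, the misclassification gain of f₁ exceeds that of f₂ on noise-free fractions if and only if it does on the noisy fractions: G_MC(p)-a₁G_MC(p_{l1})-(1-a₁)G_MC(p_{r1}) > G_MC(p)-a₂G_MC(p_{l2})-(1-a₂)G_MC(p_{r2}) if and only if G_MC(p^η)-a₁G_MC(p_{l1}^η)-(1-a₁)G_MC(p_{r1}^η) > G_MC(p^η)-a₂G_MC(p_{l2}^η)-(1-a₂)G_MC(p_{r2}^η). -/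
/-- Theorem 3 (misclassification part): for `η ≠ 1/2`, the misclassification gain of
split `f₁` exceeds that of `f₂` on noise-free fractions iff it does on the noisy
fractions `x^η = (1-2η)x + η`, where `G_MC(x) = min{x, 1-x}`. -/
theorem mc_gain_noise_tolerant (η p : ℝ)
    (hη : η ∈ Set.Icc (0:ℝ) 1) (hη2 : η ≠ 1/2) (hp : p ∈ Set.Icc (0:ℝ) 1)
    (a₁ pl₁ pr₁ a₂ pl₂ pr₂ : ℝ)
    (ha₁ : a₁ ∈ Set.Icc (0:ℝ) 1) (hpl₁ : pl₁ ∈ Set.Icc (0:ℝ) 1) (hpr₁ : pr₁ ∈ Set.Icc (0:ℝ) 1)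
    (ha₂ : a₂ ∈ Set.Icc (0:ℝ) 1) (hpl₂ : pl₂ ∈ Set.Icc (0:ℝ) 1) (hpr₂ : pr₂ ∈ Set.Icc (0:ℝ) 1)
    (noisy : ℝ → ℝ) (hnoisy : ∀ x, noisy x = (1 - 2*η)*x + η)
    (Gmc : ℝ → ℝ) (hGmc : ∀ x, Gmc x = min x (1 - x)) :
    (Gmc p - a₁ * Gmc pl₁ - (1 - a₁) * Gmc pr₁ >
      Gmc p - a₂ * Gmc pl₂ - (1 - a₂) * Gmc pr₂) ↔
    (Gmc (noisy p) - a₁ * Gmc (noisy pl₁) - (1 - a₁) * Gmc (noisy pr₁) >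
      Gmc (noisy p) - a₂ * Gmc (noisy pl₂) - (1 - a₂) * Gmc (noisy pr₂)) := by
  obtain ⟨k, c, hk, hkey⟩ : ∃ k c : ℝ, 0 < k ∧ ∀ x, Gmc (noisy x) = k * Gmc x + c := by
    rcases lt_or_gt_of_ne hη2 with h | h
    · refine ⟨1 - 2*η, η, by linarith, fun x => ?_⟩
      rw [hGmc, hnoisy, hGmc]
      have e : 1 - ((1 - 2*η)*x + η) = (1 - 2*η)*(1-x) + η := by ring
      rw [e]
      rcases le_total x (1-x) with hx | hx
      · rw [min_eq_left hx, min_eq_left (by nlinarith)]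
      · rw [min_eq_right hx, min_eq_right (by nlinarith)]
    · refine ⟨2*η - 1, 1 - η, by linarith, fun x => ?_⟩
      rw [hGmc, hnoisy, hGmc]
      have e : 1 - ((1 - 2*η)*x + η) = (2*η - 1)*x + (1 - η) := by ring
      rw [e]
      rcases le_total x (1-x) with hx | hx
      · rw [min_eq_left hx, min_eq_right (by nlinarith)]; try ring
      · rw [min_eq_right hx, min_eq_left (by nlinarith)]; try ring
  rw [hkey, hkey, hkey, hkey, hkey]
  constructor <;> intro h <;> nlinarith [mul_pos hk (by linarith :
    (0:ℝ) < 1), h, hk]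
end

section
/- (Theorem 3, twoing part.) Let η ∈ [0,1] with η ≠ 1/2, and consider two splits f₁ = (a₁, p_{l1}, p_{r1}) and f₂ = (a₂, p_{l2}, p_{r2}) with all entries in [0,1]. Writing x^η = (1-2η)x + η, the twoing criterion of f₁ exceeds that of f₂ on noise-free fractions if and only if it does on noisy fractions: a₁(1-a₁)(p_{l1} - p_{r1})² > a₂(1-a₂)(p_{l2} - p_{r2})² if and only if a₁(1-a₁)(p_{l1}^η - p_{r1}^η)² > a₂(1-a₂)(p_{l2}^η - p_{r2}^η)². -/
/-- Theorem 3 (twoing part): for `η ≠ 1/2`, the twoing criterion of split `f₁` exceeds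
that of `f₂` on noise-free fractions iff it does on the noisy fractions
`x^η = (1-2η)x + η`. -/
theorem twoing_noise_tolerant (η : ℝ)
    (hη : η ∈ Set.Icc (0:ℝ) 1) (hη2 : η ≠ 1/2)
    (a₁ pl₁ pr₁ a₂ pl₂ pr₂ : ℝ)
    (ha₁ : a₁ ∈ Set.Icc (0:ℝ) 1) (hpl₁ : pl₁ ∈ Set.Icc (0:ℝ) 1) (hpr₁ : pr₁ ∈ Set.Icc (0:ℝ) 1)
    (ha₂ : a₂ ∈ Set.Icc (0:ℝ) 1) (hpl₂ : pl₂ ∈ Set.Icc (0:ℝ) 1) (hpr₂ : pr₂ ∈ Set.Icc (0:ℝ) 1)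
    (noisy : ℝ → ℝ) (hnoisy : ∀ x, noisy x = (1 - 2*η)*x + η) :
    (a₁ * (1 - a₁) * (pl₁ - pr₁)^2 > a₂ * (1 - a₂) * (pl₂ - pr₂)^2) ↔
    (a₁ * (1 - a₁) * (noisy pl₁ - noisy pr₁)^2 >
      a₂ * (1 - a₂) * (noisy pl₂ - noisy pr₂)^2) := by
  have hc : (1 - 2*η) ≠ 0 := by intro h; apply hη2; linarith
  have hc2 : (0:ℝ) < (1 - 2*η)^2 := by positivity
  simp only [hnoisy]
  have h1 : ∀ x y : ℝ, ((1 - 2*η)*x + η - ((1 - 2*η)*y + η))^2 = (1 - 2*η)^2 * (x - y)^2 := by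
    intro x y; ring
  rw [h1, h1]
  constructor
  · intro h; nlinarith
  · intro h; nlinarith
end

section
/- Let n ≥ 1, let y_1, ..., y_n ∈ {+1, -1} be fixed labels with n⁺ = #{i : y_i = +1} > n⁻ = n - n⁺, and set ρ = (n⁺ - n⁻)/n. Let η ∈ [0, 1/2) and let Z_1, ..., Z_n be independent Bernoulli(η) random variables. Define the noisy positive count ñ⁺ = ∑_{i : y_i = +1} (1 - Z_i) + ∑_{i : y_i = -1} Z_i and ñ⁻ = n - ñ⁺. Then Pr[ñ⁺ - ñ⁻ < 0] ≤ exp(-ρ²·n·(1-2η)²/2). -/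
open MeasureTheory ProbabilityTheory Finset Real

lemma two_point_mgf_bound (p q : ℝ) (hp : 0 ≤ p) (hq : 0 ≤ q) (hpq : p + q = 1)
    {t : ℝ} (ht : t ≤ 0) :
    p * exp t + q * exp (-t) ≤ exp ((p - q) * t + t ^ 2 / 2) := by
  set D : ℝ → ℝ := fun s => p * exp s + q * exp (-s) with hDdef
  set N : ℝ → ℝ := fun s => p * exp s - q * exp (-s) with hNdef
  have hDpos : ∀ s, 0 < D s := by
    intro s
    rcases hp.lt_or_eq with hp' | hp'
    · have h1 : 0 < p * exp s := mul_pos hp' (exp_pos s)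
      have h2 : 0 ≤ q * exp (-s) := mul_nonneg hq (exp_pos (-s)).le
      simp only [hDdef]; linarith
    · have hq1 : q = 1 := by linarith
      simp [hDdef, ← hp', hq1, exp_pos]
  have hDne : ∀ s, D s ≠ 0 := fun s => (hDpos s).ne'
  have hEN : ∀ s : ℝ, HasDerivAt (fun u : ℝ => exp (-u)) (-exp (-s)) s := by
    intro s
    simpa using (hasDerivAt_neg s).exp
  have hND : ∀ s, HasDerivAt N (D s) s := by
    intro s
    have h := ((Real.hasDerivAt_exp s).const_mul p).sub ((hEN s).const_mul q)
    simpa [hNdef, hDdef, mul_neg, sub_neg_eq_add, Pi.sub_def] using h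
  have hDN : ∀ s, HasDerivAt D (N s) s := by
    intro s
    have h := ((Real.hasDerivAt_exp s).const_mul p).add ((hEN s).const_mul q)
    simpa [hNdef, hDdef, mul_neg, sub_eq_add_neg, Pi.add_def] using h
  have hg : ∀ s, HasDerivAt (fun u => N u / D u - u) (-(N s / D s) ^ 2) s := by
    intro s
    have h1 := ((hND s).div (hDN s) (hDne s)).sub (hasDerivAt_id s)
    have key : ∀ a b : ℝ, b ≠ 0 → -(a / b) ^ 2 = (b * b - a * a) / b ^ 2 - 1 := by
      intro a b hb; field_simp; ring
    have h2 := h1.congr_deriv (key _ _ (hDne s)).symm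
    simpa [Pi.sub_def] using h2
  have hganti : Antitone (fun u => N u / D u - u) := by
    apply antitone_of_deriv_nonpos
    · intro s; exact (hg s).differentiableAt
    · intro s; rw [(hg s).deriv]; exact neg_nonpos.mpr (sq_nonneg _)
  have hkey : ∀ s ≤ 0, p - q + s ≤ N s / D s := by
    intro s hs
    have h : N 0 / D 0 - 0 ≤ N s / D s - s := hganti hs
    have h0 : N 0 / D 0 - 0 = p - q := by simp [hNdef, hDdef, hpq]
    rw [h0] at h
    linarith
  have hF : ∀ s, HasDerivAt (fun u => (p - q) * u + u ^ 2 / 2 - Real.log (D u))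
      ((p - q) + s - N s / D s) s := by
    intro s
    have h1 : HasDerivAt (fun u : ℝ => (p - q) * u) (p - q) s := by
      simpa using (hasDerivAt_id s).const_mul (p - q)
    have h2 : HasDerivAt (fun u : ℝ => u ^ 2 / 2) s s := by
      have h := (hasDerivAt_pow 2 s).div_const 2
      norm_num at h
      simpa using h
    have h3 : HasDerivAt (fun u => Real.log (D u)) (N s / D s) s :=
      (hDN s).log (hDne s)
    exact (h1.add h2).sub h3
  have hFanti : AntitoneOn (fun u => (p - q) * u + u ^ 2 / 2 - Real.log (D u)) (Set.Iic 0) := by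
    apply antitoneOn_of_deriv_nonpos (convex_Iic 0)
    · exact fun s _ => ((hF s).differentiableAt.continuousAt).continuousWithinAt
    · intro s _; exact (hF s).differentiableAt.differentiableWithinAt
    · intro s hs
      rw [(hF s).deriv]
      rw [interior_Iic] at hs
      have := hkey s (le_of_lt hs)
      linarith
  have hF0 : (p - q) * 0 + (0:ℝ) ^ 2 / 2 - Real.log (D 0) = 0 := by
    simp [hDdef, hpq]
  have hle : (p - q) * 0 + (0:ℝ) ^ 2 / 2 - Real.log (D 0) ≤
      (p - q) * t + t ^ 2 / 2 - Real.log (D t) :=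
    hFanti (Set.mem_Iic.mpr ht) (Set.mem_Iic.mpr le_rfl) ht
  rw [hF0] at hle
  have hlog : Real.log (D t) ≤ (p - q) * t + t ^ 2 / 2 := by linarith
  calc p * exp t + q * exp (-t) = D t := rfl
    _ ≤ exp ((p - q) * t + t ^ 2 / 2) := (Real.log_le_iff_le_exp (hDpos t)).1 hlog

/-- At a leaf with `n` samples whose noise-free labels have positive majority margin
`ρ = (n⁺ - n⁻)/n`, under symmetric label noise of rate `η < 1/2` (i.i.d. Bernoulli(η)
corruption indicators `Z_i`), majority voting fails (`ñ⁺ < ñ⁻`) with probability at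
most `exp(-ρ²n(1-2η)²/2)`. -/
theorem majority_vote_failure_bound {Ω : Type*} [MeasurableSpace Ω]
    (μ : Measure Ω) [IsProbabilityMeasure μ]
    (n : ℕ) (hn : 1 ≤ n) (y : Fin n → ℝ) (hy : ∀ i, y i = 1 ∨ y i = -1)
    (nplus nminus : ℕ)
    (hnp : nplus = (univ.filter fun i => y i = 1).card)
    (hnm : nminus = n - nplus) (hmaj : nminus < nplus)
    (ρ : ℝ) (hρ : ρ = ((nplus : ℝ) - nminus) / n)
    (η : ℝ) (hη : η ∈ Set.Ico (0:ℝ) (1/2))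
    (Z : Fin n → Ω → ℝ) (hZmeas : ∀ i, Measurable (Z i))
    (hZval : ∀ i ω, Z i ω = 0 ∨ Z i ω = 1)
    (hZη : ∀ i, μ {ω | Z i ω = 1} = ENNReal.ofReal η)
    (hindep : iIndepFun Z μ)
    (nplusTilde : Ω → ℝ)
    (hnt : ∀ ω, nplusTilde ω =
      (∑ i ∈ univ.filter fun i => y i = 1, (1 - Z i ω)) +
      (∑ i ∈ univ.filter fun i => y i = -1, Z i ω))
    (nminusTilde : Ω → ℝ) (hnmT : ∀ ω, nminusTilde ω = n - nplusTilde ω) :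
    μ {ω | nplusTilde ω - nminusTilde ω < 0} ≤
      ENNReal.ofReal (Real.exp (-(ρ^2 * n * (1 - 2*η)^2) / 2)) := by
  obtain ⟨hη0, hη2⟩ := hη
  have hnR : (0:ℝ) < n := by exact_mod_cast hn
  set P : Finset (Fin n) := univ.filter (fun i => y i = 1) with hP
  set Nn : Finset (Fin n) := univ.filter (fun i => y i = -1) with hNn
  have hPc : Nn = univ.filter (fun i => ¬ y i = 1) := by
    ext i
    simp only [hNn, mem_filter, mem_univ, true_and]
    rcases hy i with h | h <;> simp [h] <;> norm_num
  have hnpn : nplus ≤ n := by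
    rw [hnp]
    simpa using (card_filter_le univ (fun i => y i = 1))
  have hcard : P.card + Nn.card = n := by
    rw [hPc, card_filter_add_card_filter_not, card_univ, Fintype.card_fin]
  have hNcard : (Nn.card : ℝ) = (n : ℝ) - nplus := by
    have : Nn.card = n - nplus := by omega
    rw [this, Nat.cast_sub hnpn]
  have hnm' : (nminus : ℝ) = (n : ℝ) - nplus := by
    rw [hnm, Nat.cast_sub hnpn]
  -- the summands
  set X : Fin n → Ω → ℝ := fun i ω => y i * (1 - 2 * Z i ω) with hX
  have hXmeas : ∀ i, Measurable (X i) := fun i =>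
    (measurable_const.sub ((hZmeas i).const_mul 2)).const_mul (y i)
  have hXindep : iIndepFun X μ :=
    hindep.comp (fun i => fun x : ℝ => y i * (1 - 2 * x))
      (fun i => (measurable_const.sub (measurable_id.const_mul 2)).const_mul (y i))
  set t₀ : ℝ := -(ρ * (1 - 2 * η)) with ht₀def
  have hρpos : 0 < ρ := by
    rw [hρ]
    apply div_pos _ hnR
    have : (nminus : ℝ) < nplus := by exact_mod_cast hmaj
    linarith
  have ht₀ : t₀ ≤ 0 := by
    rw [ht₀def]
    nlinarith
  have hform : ∀ (i : Fin n) (t : ℝ) (ω : Ω), Real.exp (t * X i ω) =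
      Real.exp (t * y i) * (1 - Z i ω) + Real.exp (-(t * y i)) * Z i ω := by
    intro i t ω
    rcases hZval i ω with h | h
    · have h1 : t * X i ω = t * y i := by rw [hX]; simp only [h]; ring
      rw [h1, h]; ring
    · have h1 : t * X i ω = -(t * y i) := by rw [hX]; simp only [h]; ring
      rw [h1, h]; ring
  have hZint : ∀ i, Integrable (Z i) μ := by
    intro i
    refine (integrable_const (1:ℝ)).mono' (hZmeas i).aestronglyMeasurable ?_
    refine ae_of_all _ fun ω => ?_
    rcases hZval i ω with h | h <;> simp [h]
  have hXint : ∀ (t : ℝ) (i : Fin n), Integrable (fun ω => Real.exp (t * X i ω)) μ := by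
    intro t i
    have h1 : (fun ω => Real.exp (t * X i ω)) = fun ω =>
        Real.exp (t * y i) * (1 - Z i ω) + Real.exp (-(t * y i)) * Z i ω := funext (hform i t)
    rw [h1]
    exact (((integrable_const (1:ℝ)).sub (hZint i)).const_mul _).add ((hZint i).const_mul _)
  have hEZ : ∀ i, ∫ ω, Z i ω ∂μ = η := by
    intro i
    have hset : MeasurableSet {ω | Z i ω = 1} := (hZmeas i) (measurableSet_singleton 1)
    have h1 : Z i = Set.indicator {ω | Z i ω = 1} (fun _ => (1:ℝ)) := by
      funext ω
      rcases hZval i ω with h | h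
      · have hmem : ω ∉ {ω | Z i ω = 1} := by simp [Set.mem_setOf_eq, h]
        rw [Set.indicator_of_notMem hmem, h]
      · have hmem : ω ∈ {ω | Z i ω = 1} := h
        rw [Set.indicator_of_mem hmem, h]
    rw [h1, integral_indicator_const _ hset, measureReal_def, hZη, smul_eq_mul, mul_one,
      ENNReal.toReal_ofReal hη0]
  have hmgf : ∀ i, mgf (X i) μ t₀ =
      (1 - η) * Real.exp (t₀ * y i) + η * Real.exp (-(t₀ * y i)) := by
    intro i
    have h1 : mgf (X i) μ t₀ = ∫ ω, (Real.exp (t₀ * y i) +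
        (Real.exp (-(t₀ * y i)) - Real.exp (t₀ * y i)) * Z i ω) ∂μ := by
      simp only [mgf]
      congr 1
      funext ω
      rw [hform i t₀ ω]
      ring
    have int2 : Integrable
        (fun ω => (Real.exp (-(t₀ * y i)) - Real.exp (t₀ * y i)) * Z i ω) μ :=
      (hZint i).const_mul _
    rw [h1, integral_add (integrable_const _) int2, integral_const_mul, integral_const, measureReal_def,
      hEZ i, measure_univ]
    simp only [ENNReal.toReal_one, one_smul, smul_eq_mul, one_mul]
    ring
  have hbound : ∀ i, mgf (X i) μ t₀ ≤ Real.exp (y i * (1 - 2*η) * t₀ + t₀ ^ 2 / 2) := by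
    intro i
    rw [hmgf i]
    rcases hy i with h | h
    · rw [h]
      have h2 := two_point_mgf_bound (1 - η) η (by linarith) hη0 (by ring) ht₀
      calc (1 - η) * Real.exp (t₀ * 1) + η * Real.exp (-(t₀ * 1))
          = (1 - η) * Real.exp t₀ + η * Real.exp (-t₀) := by norm_num
        _ ≤ Real.exp ((1 - η - η) * t₀ + t₀ ^ 2 / 2) := h2
        _ = Real.exp (1 * (1 - 2*η) * t₀ + t₀ ^ 2 / 2) := by ring_nf
    · rw [h]
      have h2 := two_point_mgf_bound η (1 - η) hη0 (by linarith) (by ring) ht₀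
      calc (1 - η) * Real.exp (t₀ * (-1)) + η * Real.exp (-(t₀ * (-1)))
          = η * Real.exp t₀ + (1 - η) * Real.exp (-t₀) := by
            rw [mul_neg_one, neg_neg]; ring
        _ ≤ Real.exp ((η - (1 - η)) * t₀ + t₀ ^ 2 / 2) := h2
        _ = Real.exp ((-1) * (1 - 2*η) * t₀ + t₀ ^ 2 / 2) := by ring_nf
  have hsumy : ∑ i, y i = (nplus : ℝ) - ((n : ℝ) - nplus) := by
    rw [← sum_filter_add_sum_filter_not univ (fun i => y i = 1) y, ← hP, ← hPc]
    have h1 : ∑ i ∈ P, y i = (P.card : ℝ) := by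
      rw [Finset.sum_congr rfl (fun i hi => (mem_filter.mp hi).2), Finset.sum_const,
        nsmul_eq_mul, mul_one]
    have h2 : ∑ i ∈ Nn, y i = -(Nn.card : ℝ) := by
      rw [Finset.sum_congr rfl (fun i hi => (mem_filter.mp hi).2), Finset.sum_const,
        nsmul_eq_mul, mul_neg_one]
    rw [h1, h2, hNcard, hnp]
    ring
  -- rewrite the failure event
  have hsub : {ω | nplusTilde ω - nminusTilde ω < 0} ⊆ {ω | (∑ i, X i) ω ≤ 0} := by
    intro ω hω
    simp only [Set.mem_setOf_eq] at hω ⊢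
    have e1 : ∑ i ∈ P, X i ω = (P.card : ℝ) - 2 * ∑ i ∈ P, Z i ω := by
      have : ∀ i ∈ P, X i ω = 1 - 2 * Z i ω := by
        intro i hi
        rw [hX]
        simp only [(mem_filter.mp hi).2, one_mul]
      rw [Finset.sum_congr rfl this, Finset.sum_sub_distrib, Finset.sum_const,
        ← Finset.mul_sum, nsmul_eq_mul, mul_one]
    have e2 : ∑ i ∈ Nn, X i ω = 2 * (∑ i ∈ Nn, Z i ω) - (Nn.card : ℝ) := by
      have : ∀ i ∈ Nn, X i ω = 2 * Z i ω - 1 := by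
        intro i hi
        rw [hX]
        simp only [(mem_filter.mp hi).2]
        ring
      rw [Finset.sum_congr rfl this, Finset.sum_sub_distrib, Finset.sum_const,
        ← Finset.mul_sum, nsmul_eq_mul, mul_one]
    have e3 : ∑ i ∈ P, (1 - Z i ω) = (P.card : ℝ) - ∑ i ∈ P, Z i ω := by
      rw [Finset.sum_sub_distrib, Finset.sum_const, nsmul_eq_mul, mul_one]
    have eS : (∑ i, X i) ω = ∑ i ∈ P, X i ω + ∑ i ∈ Nn, X i ω := by
      rw [Finset.sum_apply, hPc]
      exact (sum_filter_add_sum_filter_not univ (fun i => y i = 1) (fun i => X i ω)).symm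
    have hnpt := hnt ω
    have hnmt := hnmT ω
    rw [e3] at hnpt
    have hncast : (n : ℝ) = (P.card : ℝ) + (Nn.card : ℝ) := by exact_mod_cast hcard.symm
    rw [eS, e1, e2]
    rw [hnmt, hncast, hnpt] at hω
    linarith
  -- Chernoff
  have hSint : Integrable (fun ω => Real.exp (t₀ * (∑ i, X i) ω)) μ :=
    hXindep.integrable_exp_mul_sum hXmeas (fun i _ => hXint t₀ i)
  have hchain := measure_le_le_exp_mul_mgf (μ := μ) (X := ∑ i, X i) 0 ht₀ hSint
  have hmgfS : mgf (∑ i, X i) μ t₀ ≤ Real.exp (-(ρ^2 * n * (1 - 2*η)^2) / 2) := by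
    rw [hXindep.mgf_sum hXmeas]
    calc ∏ i, mgf (X i) μ t₀
        ≤ ∏ i, Real.exp (y i * (1 - 2*η) * t₀ + t₀ ^ 2 / 2) :=
          Finset.prod_le_prod (fun i _ => mgf_nonneg) (fun i _ => hbound i)
      _ = Real.exp (∑ i, (y i * (1 - 2*η) * t₀ + t₀ ^ 2 / 2)) := (Real.exp_sum _ _).symm
      _ = Real.exp ((∑ i, y i) * ((1 - 2*η) * t₀) + n * (t₀ ^ 2 / 2)) := by
          congr 1
          rw [Finset.sum_add_distrib, Finset.sum_const, card_univ, Fintype.card_fin,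
            nsmul_eq_mul]
          congr 1
          rw [Finset.sum_mul]
          exact Finset.sum_congr rfl fun i _ => by ring
      _ = Real.exp (-(ρ^2 * n * (1 - 2*η)^2) / 2) := by
          congr 1
          rw [hsumy, ht₀def, hρ, hnm']
          field_simp
          ring
  calc μ {ω | nplusTilde ω - nminusTilde ω < 0}
      ≤ μ {ω | (∑ i, X i) ω ≤ 0} := measure_mono hsub
    _ ≤ ENNReal.ofReal (Real.exp (-(ρ^2 * n * (1 - 2*η)^2) / 2)) := by
        rw [← ENNReal.ofReal_toReal (measure_ne_top μ {ω | (∑ i, X i) ω ≤ 0})]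
        apply ENNReal.ofReal_le_ofReal
        refine hchain.trans ?_
        simpa using hmgfS
end

section
/- (Lemma 7.) Let n ≥ 1, let y_1, ..., y_n ∈ {+1, -1} be fixed labels with n⁺ = #{i : y_i = +1} > n⁻ = n - n⁺, and set ρ = (n⁺ - n⁻)/n. Let η ∈ [0, 1/2), δ ∈ (0,1), and let Z_1, ..., Z_n be independent Bernoulli(η) random variables. Define ñ⁺ = ∑_{i : y_i = +1} (1 - Z_i) + ∑_{i : y_i = -1} Z_i and ñ⁻ = n - ñ⁺. If n ≥ (2/(ρ²(1-2η)²))·ln(1/δ), then Pr[ñ⁺ - ñ⁻ < 0] ≤ δ; that is, majority voting at the leaf succeeds with probability at least 1-δ. -/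
open MeasureTheory ProbabilityTheory Finset

set_option maxHeartbeats 1000000

lemma sinh_le_mul_cosh' {x : ℝ} (hx : 0 ≤ x) : Real.sinh x ≤ x * Real.cosh x := by
  have hd : ∀ u : ℝ, HasDerivAt (fun u => u * Real.cosh u - Real.sinh u)
      (u * Real.sinh u) u := by
    intro u
    have h := ((hasDerivAt_id u).mul (Real.hasDerivAt_cosh u)).sub (Real.hasDerivAt_sinh u)
    simp only [id] at h
    exact h.congr_deriv (by ring)
  have key : MonotoneOn (fun u => u * Real.cosh u - Real.sinh u) (Set.Ici 0) := by
    apply monotoneOn_of_deriv_nonneg (convex_Ici 0)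
    · exact Continuous.continuousOn (by continuity)
    · intro u hu
      exact (hd u).differentiableAt.differentiableWithinAt
    · intro u hu
      rw [interior_Ici] at hu
      rw [(hd u).deriv]
      exact mul_nonneg (le_of_lt hu) (Real.sinh_nonneg_iff.mpr (le_of_lt hu))
  have h0 := key Set.self_mem_Ici (Set.mem_Ici.mpr hx) hx
  simp only [zero_mul, Real.sinh_zero, sub_zero, zero_sub] at h0
  linarith

lemma hoeff_neg {β x : ℝ} (hβ0 : 0 < β) (hβ1 : β ≤ 1) (hx0 : 0 ≤ x) (hxβ : x ≤ β) :
    Real.cosh x - β * Real.sinh x ≤ Real.exp (-(β * x) + x ^ 2 / 2) := by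
  have hd : ∀ u : ℝ, HasDerivAt
      (fun u => Real.exp (β * u - u ^ 2 / 2) * (Real.cosh u - β * Real.sinh u))
      (Real.exp (β * u - u ^ 2 / 2) *
        (-(u * Real.cosh u) + (1 - β ^ 2 + β * u) * Real.sinh u)) u := by
    intro u
    have h1 : HasDerivAt (fun u : ℝ => β * u - u ^ 2 / 2) (β - u) u := by
      have := ((hasDerivAt_id u).const_mul β).sub ((hasDerivAt_pow 2 u).div_const 2)
      exact this.congr_deriv (by ring)
    have h2 := (Real.hasDerivAt_exp (β * u - u ^ 2 / 2)).comp u h1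
    have h3 : HasDerivAt (fun u : ℝ => Real.cosh u - β * Real.sinh u)
        (Real.sinh u - β * Real.cosh u) u :=
      (Real.hasDerivAt_cosh u).sub ((Real.hasDerivAt_sinh u).const_mul β)
    have h4 := h2.mul h3
    simp only [Function.comp] at h4
    exact h4.congr_deriv (by ring)
  have hmono : AntitoneOn
      (fun u => Real.exp (β * u - u ^ 2 / 2) * (Real.cosh u - β * Real.sinh u))
      (Set.Icc 0 β) := by
    apply antitoneOn_of_deriv_nonpos (convex_Icc 0 β)
    · exact Continuous.continuousOn (by continuity)
    · intro u hu
      exact (hd u).differentiableAt.differentiableWithinAt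
    · intro u hu
      rw [interior_Icc] at hu
      rw [(hd u).deriv]
      have hu0 : 0 < u := hu.1
      have huβ : u < β := hu.2
      have hsc := sinh_le_mul_cosh' hu0.le
      have hsn := Real.sinh_nonneg_iff.mpr hu0.le
      have hcp := Real.cosh_pos u
      have hinner : -(u * Real.cosh u) + (1 - β ^ 2 + β * u) * Real.sinh u ≤ 0 := by
        rcases le_or_gt (1 - β ^ 2 + β * u) 0 with h | h
        · nlinarith
        · nlinarith [mul_nonneg hsn (show (0:ℝ) ≤ β ^ 2 - β * u by nlinarith)]
      exact mul_nonpos_of_nonneg_of_nonpos (Real.exp_pos _).le hinner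
  have hF0 : Real.exp (β * 0 - 0 ^ 2 / 2) * (Real.cosh 0 - β * Real.sinh 0) = 1 := by
    norm_num
  have hE : (0:ℝ) < Real.exp (β * x - x ^ 2 / 2) := Real.exp_pos _
  have hle1 : Real.exp (β * x - x ^ 2 / 2) * (Real.cosh x - β * Real.sinh x) ≤ 1 := by
    calc Real.exp (β * x - x ^ 2 / 2) * (Real.cosh x - β * Real.sinh x)
        ≤ Real.exp (β * 0 - 0 ^ 2 / 2) * (Real.cosh 0 - β * Real.sinh 0) :=
          hmono (Set.mem_Icc.mpr ⟨le_rfl, hβ0.le⟩) (Set.mem_Icc.mpr ⟨hx0, hxβ⟩) hx0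
      _ = 1 := hF0
  have hkey : Real.cosh x - β * Real.sinh x ≤ 1 / Real.exp (β * x - x ^ 2 / 2) := by
    rw [le_div_iff₀ hE]
    linarith [hle1, mul_comm (Real.exp (β * x - x ^ 2 / 2)) (Real.cosh x - β * Real.sinh x)]
  calc Real.cosh x - β * Real.sinh x ≤ 1 / Real.exp (β * x - x ^ 2 / 2) := hkey
    _ = Real.exp (-(β * x) + x ^ 2 / 2) := by
        rw [one_div, ← Real.exp_neg]
        congr 1
        ring

lemma hoeff_pos {β x : ℝ} (hβ0 : 0 ≤ β) (hx0 : 0 ≤ x) :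
    Real.cosh x + β * Real.sinh x ≤ Real.exp (β * x + x ^ 2 / 2) := by
  rw [Real.exp_add]
  have h1 := sinh_le_mul_cosh' hx0
  have h2 := Real.cosh_le_exp_half_sq x
  have h3 := Real.add_one_le_exp (β * x)
  have hcp := Real.cosh_pos x
  have h4 : Real.cosh x + β * Real.sinh x ≤ (1 + β * x) * Real.cosh x := by
    nlinarith [mul_le_mul_of_nonneg_left h1 hβ0]
  have h5 : (1 + β * x) * Real.cosh x ≤ Real.exp (β * x) * Real.exp (x ^ 2 / 2) := by
    calc (1 + β * x) * Real.cosh x ≤ Real.exp (β * x) * Real.cosh x :=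
          mul_le_mul_of_nonneg_right (by linarith) hcp.le
      _ ≤ Real.exp (β * x) * Real.exp (x ^ 2 / 2) :=
          mul_le_mul_of_nonneg_left h2 (Real.exp_pos _).le
  linarith

/-- Lemma 7: at a leaf with `n` samples whose noise-free labels have positive majority
margin `ρ = (n⁺ - n⁻)/n`, under symmetric label noise of rate `η < 1/2`, if
`n ≥ (2/(ρ²(1-2η)²))·ln(1/δ)` then majority voting fails with probability at most `δ`,
i.e. it succeeds with probability at least `1-δ`. -/
theorem majority_vote_sample_complexity {Ω : Type*} [MeasurableSpace Ω]
    (μ : Measure Ω) [IsProbabilityMeasure μ]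
    (n : ℕ) (hn : 1 ≤ n) (y : Fin n → ℝ) (hy : ∀ i, y i = 1 ∨ y i = -1)
    (nplus nminus : ℕ)
    (hnp : nplus = (univ.filter fun i => y i = 1).card)
    (hnm : nminus = n - nplus) (hmaj : nminus < nplus)
    (ρ : ℝ) (hρ : ρ = ((nplus : ℝ) - nminus) / n)
    (η : ℝ) (hη : η ∈ Set.Ico (0:ℝ) (1/2))
    (δ : ℝ) (hδ : δ ∈ Set.Ioo (0:ℝ) 1)
    (Z : Fin n → Ω → ℝ) (hZmeas : ∀ i, Measurable (Z i))
    (hZval : ∀ i ω, Z i ω = 0 ∨ Z i ω = 1)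
    (hZη : ∀ i, μ {ω | Z i ω = 1} = ENNReal.ofReal η)
    (hindep : iIndepFun Z μ)
    (nplusTilde : Ω → ℝ)
    (hnt : ∀ ω, nplusTilde ω =
      (∑ i ∈ univ.filter fun i => y i = 1, (1 - Z i ω)) +
      (∑ i ∈ univ.filter fun i => y i = -1, Z i ω))
    (nminusTilde : Ω → ℝ) (hnmT : ∀ ω, nminusTilde ω = n - nplusTilde ω)
    (hsample : (n : ℝ) ≥ (2 / (ρ^2 * (1 - 2*η)^2)) * Real.log (1/δ)) :
    μ {ω | nplusTilde ω - nminusTilde ω < 0} ≤ ENNReal.ofReal δ := by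
  classical
  obtain ⟨hη0, hη2⟩ := hη
  obtain ⟨hδ0, hδ1⟩ := hδ
  set β : ℝ := 1 - 2 * η with hβ
  clear_value β
  have hβ0 : 0 < β := by rw [hβ]; linarith
  have hβ1 : β ≤ 1 := by rw [hβ]; linarith
  have hnpos : (0:ℝ) < n := by exact_mod_cast hn
  set P := univ.filter (fun i : Fin n => y i = 1) with hP
  set M := univ.filter (fun i : Fin n => y i = -1) with hM
  have hMP : M = univ.filter (fun i => ¬ y i = 1) := by
    rw [hM]
    apply Finset.filter_congr
    intro i _
    rcases hy i with h1 | h1 <;> simp [h1] <;> norm_num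
  have hnpn : nplus ≤ n := by
    rw [hnp]
    calc (univ.filter fun i => y i = 1).card ≤ (univ : Finset (Fin n)).card :=
      Finset.card_filter_le _ _
    _ = n := by simp
  have hPcard : P.card = nplus := by rw [hP, hnp]
  have hcardPM : P.card + M.card = n := by
    rw [hMP, hP, Finset.card_filter_add_card_filter_not]
    simp
  have hMcard : M.card = nminus := by omega
  have hnm' : (nminus : ℝ) = (n : ℝ) - nplus := by
    rw [hnm]
    push_cast [Nat.cast_sub hnpn]
    ring
  have hmaj' : (nminus : ℝ) < nplus := by exact_mod_cast hmaj
  have hρpos : 0 < ρ := by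
    rw [hρ]
    exact div_pos (by linarith) hnpos
  have hρ1 : ρ ≤ 1 := by
    rw [hρ, div_le_one hnpos]
    have h1 : (0:ℝ) ≤ nminus := Nat.cast_nonneg _
    have h2 : (nplus:ℝ) ≤ n := by exact_mod_cast hnpn
    linarith
  set s : ℝ := ρ * β with hs
  clear_value s
  have hs0 : 0 < s := by rw [hs]; exact mul_pos hρpos hβ0
  have hsβ : s ≤ β := by rw [hs]; nlinarith
  set t : ℝ := -s with ht
  clear_value t
  have htle : t ≤ 0 := by rw [ht]; linarith
  -- the random variables X i = y i * (1 - 2 Z i)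
  set X : Fin n → Ω → ℝ := fun i ω => y i * (1 - 2 * Z i ω) with hX
  have hXmeas : ∀ i, Measurable (X i) := fun i =>
    ((measurable_const.sub ((hZmeas i).const_mul 2)).const_mul (y i))
  have hXindep : iIndepFun X μ :=
    hindep.comp (fun i (x : ℝ) => y i * (1 - 2 * x))
      (fun i => (measurable_const.sub (measurable_id.const_mul 2)).const_mul (y i))
  -- integral of Z i
  have hAmeas : ∀ i, MeasurableSet {ω | Z i ω = 1} := fun i =>
    hZmeas i (measurableSet_singleton 1)
  have hZind : ∀ i, Z i = Set.indicator {ω | Z i ω = 1} (fun _ => (1:ℝ)) := by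
    intro i
    funext ω
    rcases hZval i ω with h | h
    · simp [Set.indicator_apply, h]
    · simp [Set.indicator_apply, h]
  have hZint : ∀ i, Integrable (Z i) μ := fun i => by
    rw [hZind i]
    exact (integrable_const 1).indicator (hAmeas i)
  have hZavg : ∀ i, ∫ ω, Z i ω ∂μ = η := by
    intro i
    rw [hZind i, integral_indicator (hAmeas i)]
    rw [setIntegral_const, measureReal_def, hZη i, ENNReal.toReal_ofReal hη0, smul_eq_mul, mul_one]
  -- exponential identity
  have hexpX : ∀ i, (fun ω => Real.exp (t * X i ω)) =
      fun ω => Real.exp (t * y i) + (Real.exp (-(t * y i)) - Real.exp (t * y i)) * Z i ω := by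
    intro i
    funext ω
    simp only [hX]
    rcases hZval i ω with h | h
    · rw [h]
      have e1 : t * (y i * (1 - 2 * 0)) = t * y i := by ring
      rw [e1]
      ring
    · rw [h]
      have e1 : t * (y i * (1 - 2 * 1)) = -(t * y i) := by ring
      rw [e1]
      ring
  have hexpint : ∀ i, Integrable (fun ω => Real.exp (t * X i ω)) μ := by
    intro i
    rw [hexpX i]
    exact (integrable_const _).add ((hZint i).const_mul _)
  have hmgf : ∀ i, mgf (X i) μ t =
      Real.exp (t * y i) + (Real.exp (-(t * y i)) - Real.exp (t * y i)) * η := by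
    intro i
    have hdef : mgf (X i) μ t = ∫ ω, Real.exp (t * X i ω) ∂μ := rfl
    rw [hdef, hexpX i,
      integral_add (integrable_const _) ((hZint i).const_mul _),
      integral_const, integral_const_mul, hZavg i]
    simp [measure_univ]
  -- the sum S
  set S : Ω → ℝ := ∑ i, X i with hSdef
  have hSapp : ∀ ω, S ω = ∑ i, X i ω := fun ω => by
    rw [hSdef, Finset.sum_apply]
  -- event identification
  have hevent : ∀ ω, nplusTilde ω - nminusTilde ω = S ω := by
    intro ω
    have eP : ∑ i ∈ P, X i ω = 2 * (∑ i ∈ P, (1 - Z i ω)) - P.card := by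
      calc ∑ i ∈ P, X i ω = ∑ i ∈ P, (2 * (1 - Z i ω) - 1) := by
            apply Finset.sum_congr rfl
            intro i hi
            rw [hP] at hi
            have hyi : y i = 1 := (Finset.mem_filter.mp hi).2
            simp only [hX]
            rw [hyi]
            ring
        _ = 2 * (∑ i ∈ P, (1 - Z i ω)) - P.card := by
            rw [Finset.sum_sub_distrib, Finset.sum_const, ← Finset.mul_sum]
            simp [nsmul_eq_mul]
    have eM : ∑ i ∈ M, X i ω = 2 * (∑ i ∈ M, Z i ω) - M.card := by
      calc ∑ i ∈ M, X i ω = ∑ i ∈ M, (2 * Z i ω - 1) := by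
            apply Finset.sum_congr rfl
            intro i hi
            rw [hM] at hi
            have hyi : y i = -1 := (Finset.mem_filter.mp hi).2
            simp only [hX]
            rw [hyi]
            ring
        _ = 2 * (∑ i ∈ M, Z i ω) - M.card := by
            rw [Finset.sum_sub_distrib, Finset.sum_const, ← Finset.mul_sum]
            simp [nsmul_eq_mul]
    have hsplit : S ω = ∑ i ∈ P, X i ω + ∑ i ∈ M, X i ω := by
      rw [hSapp ω,
        ← Finset.sum_filter_add_sum_filter_not univ (fun i => y i = 1) (fun i => X i ω),
        ← hMP]
    have hcast : (n:ℝ) = (P.card : ℝ) + (M.card : ℝ) := by exact_mod_cast hcardPM.symm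
    rw [hnmT ω, hnt ω, hsplit, eP, eM]
    linarith [hcast]
  -- mgf of S
  have hmgfS : mgf S μ t =
      ((1-η) * Real.exp (-s) + η * Real.exp s) ^ nplus *
      ((1-η) * Real.exp s + η * Real.exp (-s)) ^ nminus := by
    have h1 : mgf S μ t = ∏ i, mgf (X i) μ t := by
      rw [hSdef]
      exact hXindep.mgf_sum hXmeas univ
    rw [h1,
      ← Finset.prod_filter_mul_prod_filter_not univ (fun i => y i = 1) (fun i => mgf (X i) μ t),
      ← hMP, ← hP]
    have e1 : ∏ i ∈ P, mgf (X i) μ t = ((1-η) * Real.exp (-s) + η * Real.exp s) ^ nplus := by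
      rw [Finset.prod_congr rfl (fun i hi => ?_), Finset.prod_const, hPcard]
      rw [hP] at hi
      have hyi : y i = 1 := (Finset.mem_filter.mp hi).2
      rw [hmgf i, hyi, mul_one, ht, neg_neg]
      ring
    have e2 : ∏ i ∈ M, mgf (X i) μ t = ((1-η) * Real.exp s + η * Real.exp (-s)) ^ nminus := by
      rw [Finset.prod_congr rfl (fun i hi => ?_), Finset.prod_const, hMcard]
      rw [hM] at hi
      have hyi : y i = -1 := (Finset.mem_filter.mp hi).2
      have e3 : t * (-1 : ℝ) = s := by rw [ht]; ring
      rw [hmgf i, hyi, e3]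
      ring
    rw [e1, e2]
  -- bounds on the factors
  have hfnonneg : 0 ≤ (1-η) * Real.exp (-s) + η * Real.exp s := by
    have := Real.exp_pos (-s)
    have := Real.exp_pos s
    nlinarith
  have hf_le : (1-η) * Real.exp (-s) + η * Real.exp s ≤ Real.exp (-(β * s) + s ^ 2 / 2) := by
    have hid : (1-η) * Real.exp (-s) + η * Real.exp s = Real.cosh s - β * Real.sinh s := by
      rw [Real.cosh_eq, Real.sinh_eq, hβ]
      ring
    rw [hid]
    exact hoeff_neg hβ0 hβ1 hs0.le hsβ
  have hg_le : (1-η) * Real.exp s + η * Real.exp (-s) ≤ Real.exp (β * s + s ^ 2 / 2) := by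
    have hid : (1-η) * Real.exp s + η * Real.exp (-s) = Real.cosh s + β * Real.sinh s := by
      rw [Real.cosh_eq, Real.sinh_eq, hβ]
      ring
    rw [hid]
    exact hoeff_pos hβ0.le hs0.le
  have hgnonneg : 0 ≤ (1-η) * Real.exp s + η * Real.exp (-s) := by
    have := Real.exp_pos (-s)
    have := Real.exp_pos s
    nlinarith
  -- arithmetic of the exponent
  have h1' : (nplus:ℝ) - nminus = n * ρ := by
    rw [hρ]
    field_simp
  have h2' : (nplus:ℝ) + nminus = n := by rw [hnm']; ring
  have harith : (nplus:ℝ) * (-(β * s) + s ^ 2 / 2) + (nminus:ℝ) * (β * s + s ^ 2 / 2)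
      = -((n:ℝ) * ρ ^ 2 * β ^ 2 / 2) := by
    rw [hs]
    linear_combination (-(ρ * β ^ 2)) * h1' + (ρ ^ 2 * β ^ 2 / 2) * h2'
  -- final exp bound
  have hfinal : Real.exp (-((n:ℝ) * ρ ^ 2 * β ^ 2 / 2)) ≤ δ := by
    rw [← Real.exp_log hδ0]
    apply Real.exp_le_exp.mpr
    have hl : Real.log (1/δ) = - Real.log δ := by rw [one_div, Real.log_inv]
    have hc : (0:ℝ) < ρ ^ 2 * β ^ 2 := by positivity
    rw [ge_iff_le, div_mul_eq_mul_div, div_le_iff₀ hc] at hsample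
    rw [hl] at hsample
    nlinarith
  -- the Chernoff chain
  have hSint : Integrable (fun ω => Real.exp (t * S ω)) μ :=
    hXindep.integrable_exp_mul_sum hXmeas (fun i _ => hexpint i)
  have hchern := measure_le_le_exp_mul_mgf (μ := μ) (X := S) 0 htle hSint
  have hreal : (μ {ω | S ω ≤ 0}).toReal ≤ δ := by
    calc (μ {ω | S ω ≤ 0}).toReal ≤ Real.exp (-t * 0) * mgf S μ t := hchern
      _ = mgf S μ t := by simp
      _ = ((1-η) * Real.exp (-s) + η * Real.exp s) ^ nplus *
          ((1-η) * Real.exp s + η * Real.exp (-s)) ^ nminus := hmgfS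
      _ ≤ Real.exp (-(β * s) + s ^ 2 / 2) ^ nplus *
          Real.exp (β * s + s ^ 2 / 2) ^ nminus := by
          apply mul_le_mul
          · exact pow_le_pow_left₀ hfnonneg hf_le _
          · exact pow_le_pow_left₀ hgnonneg hg_le _
          · exact pow_nonneg hgnonneg _
          · exact pow_nonneg (Real.exp_pos _).le _
      _ = Real.exp ((nplus:ℝ) * (-(β * s) + s ^ 2 / 2) + (nminus:ℝ) * (β * s + s ^ 2 / 2)) := by
          rw [← Real.exp_nat_mul, ← Real.exp_nat_mul, ← Real.exp_add]
      _ = Real.exp (-((n:ℝ) * ρ ^ 2 * β ^ 2 / 2)) := by rw [harith]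
      _ ≤ δ := hfinal
  have hsubset : {ω | nplusTilde ω - nminusTilde ω < 0} ⊆ {ω | S ω ≤ 0} := by
    intro ω hω
    simp only [Set.mem_setOf_eq] at hω ⊢
    rw [← hevent ω]
    exact le_of_lt hω
  calc μ {ω | nplusTilde ω - nminusTilde ω < 0} ≤ μ {ω | S ω ≤ 0} := measure_mono hsubset
    _ = ENNReal.ofReal ((μ {ω | S ω ≤ 0}).toReal) := (ENNReal.ofReal_toReal (measure_ne_top μ _)).symm
    _ ≤ ENNReal.ofReal δ := ENNReal.ofReal_le_ofReal hreal
end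

section
/- (Remark 4: entropy gain is not noise-tolerant.) Let H(x) = -x·ln x - (1-x)·ln(1-x) (with 0·ln 0 = 0) and for a split (a, p_l, p_r) at a node with positive fraction p define gain_H = H(p) - a·H(p_l) - (1-a)·H(p_r). Consider the parent fraction p = 3/10 and the two splits f₁ = (a₁, p_{l1}, p_{r1}) = (1/2, 1/10, 1/2) and f₂ = (a₂, p_{l2}, p_{r2}) = (3/10, 1/100, 297/700). Let η = 2/5 and write x^η = (1-2η)x + η. Then gain_H(f₁) computed at (p, p_{l1}, p_{r1}) is strictly less than gain_H(f₂) computed at (p, p_{l2}, p_{r2}), but gain_H computed at the noisy fractions (p^η, p_{l2}^η, p_{r2}^η) for f₂ is strictly less than gain_H computed at (p^η, p_{l1}^η, p_{r1}^η) for f₁. Hence the split maximizing entropy gain can change under symmetric label noise. -/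
private lemma expUB10 {s U : ℝ} (h0 : 0 ≤ s) (h1 : s ≤ 1)
    (h : 1 + s + s^2/2 + s^3/6 + s^4/24 + s^5/120 + s^6/720 + s^7/5040 + s^8/40320
        + s^9/362880 + s^10*11/36288000 ≤ U) :
    Real.exp s ≤ U := by
  have hb := Real.exp_bound' h0 h1 (n := 10) (by norm_num)
  refine le_trans (le_trans hb ?_) h
  rw [Finset.sum_range_succ, Finset.sum_range_succ, Finset.sum_range_succ,
    Finset.sum_range_succ, Finset.sum_range_succ, Finset.sum_range_succ,
    Finset.sum_range_succ, Finset.sum_range_succ, Finset.sum_range_succ,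
    Finset.sum_range_succ, Finset.sum_range_zero]
  norm_num [Nat.factorial]

private lemma expLB10 {s L : ℝ} (h0 : 0 ≤ s)
    (h : L ≤ 1 + s + s^2/2 + s^3/6 + s^4/24 + s^5/120 + s^6/720 + s^7/5040 + s^8/40320
        + s^9/362880) :
    L ≤ Real.exp s := by
  refine le_trans h (le_trans ?_ (Real.sum_le_exp_of_nonneg h0 10))
  rw [Finset.sum_range_succ, Finset.sum_range_succ, Finset.sum_range_succ,
    Finset.sum_range_succ, Finset.sum_range_succ, Finset.sum_range_succ,
    Finset.sum_range_succ, Finset.sum_range_succ, Finset.sum_range_succ,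
    Finset.sum_range_succ, Finset.sum_range_zero]
  norm_num [Nat.factorial]

private lemma log_lt_of {q s U : ℝ} (k : ℕ) (hq : 0 < q)
    (hU : Real.exp s ≤ U) (h : q * U ^ k < 1) : Real.log q < -((k : ℝ) * s) := by
  have hepos : 0 < Real.exp s := Real.exp_pos s
  have hU0 : 0 < U := lt_of_lt_of_le hepos hU
  rw [Real.log_lt_iff_lt_exp hq, Real.exp_neg, Real.exp_nat_mul]
  have hpow : Real.exp s ^ k ≤ U ^ k := pow_le_pow_left₀ hepos.le hU k
  have hUk : 0 < U ^ k := pow_pos hU0 k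
  have hek : 0 < Real.exp s ^ k := pow_pos hepos k
  have h2 : q < (U ^ k)⁻¹ := by
    rw [show (U ^ k)⁻¹ = 1 / U ^ k by ring, lt_div_iff₀ hUk]
    linarith [mul_comm q (U ^ k)]
  have h3 : (U ^ k)⁻¹ ≤ (Real.exp s ^ k)⁻¹ := by
    apply inv_anti₀ hek hpow
  linarith

private lemma lt_log_of {q s L : ℝ} (k : ℕ) (hq : 0 < q) (hL0 : 0 < L)
    (hL : L ≤ Real.exp s) (h : 1 < q * L ^ k) : -((k : ℝ) * s) < Real.log q := by
  rw [Real.lt_log_iff_exp_lt hq, Real.exp_neg, Real.exp_nat_mul]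
  have hpow : L ^ k ≤ Real.exp s ^ k := pow_le_pow_left₀ hL0.le hL k
  have hLk : 0 < L ^ k := pow_pos hL0 k
  have hek : 0 < Real.exp s ^ k := pow_pos (Real.exp_pos s) k
  have h1 : (Real.exp s ^ k)⁻¹ ≤ (L ^ k)⁻¹ := inv_anti₀ hLk hpow
  have h2 : (L ^ k)⁻¹ < q := by
    rw [show (L ^ k)⁻¹ = 1 / L ^ k by ring, div_lt_iff₀ hLk]
    linarith [mul_comm q (L ^ k)]
  linarith

private lemma loghi0 : Real.log (3/10 : ℝ) < -6019859/5000000 := by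
  have h := log_lt_of (q := 3/10) (s := 6019859/10000000) (U := 662524873514181022229221464950054227920115387997812669167947332004732223631421/362880000000000000000000000000000000000000000000000000000000000000000000000000) 2 (by norm_num)
    (expUB10 (by norm_num) (by norm_num) (by norm_num)) (by norm_num)
  push_cast at h
  linarith

private lemma loglo0 : (-60198691/50000000 : ℝ) < Real.log (3/10 : ℝ) := by
  have h := lt_log_of (q := 3/10) (s := 60198691/100000000) (L := 94646505907454318710387292379165664990217641379157639382915737980189583111973/51840000000000000000000000000000000000000000000000000000000000000000000000000) 2 (by norm_num)
    (by norm_num) (expLB10 (by norm_num) (by norm_num)) (by norm_num)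
  push_cast at h
  linarith

private lemma loghi1 : Real.log (7/10 : ℝ) < -8916861/25000000 := by
  have h := log_lt_of (q := 7/10) (s := 8916861/25000000) (U := 61035125492446915890078347351849490795201933719192501314494292698382954951355341/42724609375000000000000000000000000000000000000000000000000000000000000000000000) 1 (by norm_num)
    (expUB10 (by norm_num) (by norm_num) (by norm_num)) (by norm_num)
  push_cast at h
  linarith

private lemma loglo1 : (-7133509/20000000 : ℝ) < Real.log (7/10 : ℝ) := by
  have h := lt_log_of (q := 7/10) (s := 7133509/20000000) (L := 265420934317457386454193574067248441381865490743100959796153170094701989/185794560000000000000000000000000000000000000000000000000000000000000000) 1 (by norm_num)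
    (by norm_num) (expLB10 (by norm_num) (by norm_num)) (by norm_num)
  push_cast at h
  linarith

private lemma loghi2 : Real.log (1/10 : ℝ) < -115129179/50000000 := by
  have h := log_lt_of (q := 1/10) (s := 38376393/50000000) (U := 94256471029562792335487375220736253883914432275939400473289658655064229115259351509/43750000000000000000000000000000000000000000000000000000000000000000000000000000000) 3 (by norm_num)
    (expUB10 (by norm_num) (by norm_num) (by norm_num)) (by norm_num)
  push_cast at h
  linarith

private lemma loglo2 : (-230258661/100000000 : ℝ) < Real.log (1/10 : ℝ) := by
  have h := lt_log_of (q := 1/10) (s := 76752887/100000000) (L := 781801648027652427604853788582803019939640917748573365399024397065230675148727/362880000000000000000000000000000000000000000000000000000000000000000000000000) 3 (by norm_num)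
    (by norm_num) (expLB10 (by norm_num) (by norm_num)) (by norm_num)
  push_cast at h
  linarith

private lemma loghi3 : Real.log (9/10 : ℝ) < -10536001/100000000 := by
  have h := log_lt_of (q := 9/10) (s := 10536001/100000000) (U := 575999708741165715409217681563308119598647588757934140961500568294245009393575276080003/518400000000000000000000000000000000000000000000000000000000000000000000000000000000000) 1 (by norm_num)
    (expUB10 (by norm_num) (by norm_num) (by norm_num)) (by norm_num)
  push_cast at h
  linarith

private lemma loglo3 : (-5268051/50000000 : ℝ) < Real.log (9/10 : ℝ) := by
  have h := lt_log_of (q := 9/10) (s := 5268051/50000000) (L := 9722227125550147027303291000378763150049870931417796304333032189056040771/8750000000000000000000000000000000000000000000000000000000000000000000000) 1 (by norm_num)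
    (by norm_num) (expLB10 (by norm_num) (by norm_num)) (by norm_num)
  push_cast at h
  linarith

private lemma loghi4 : Real.log (1/2 : ℝ) < -17328667/25000000 := by
  have h := log_lt_of (q := 1/2) (s := 17328667/25000000) (U := 6921383279405789384185566348160381755217897737571410558201447760120886325329872429/3460693359375000000000000000000000000000000000000000000000000000000000000000000000) 1 (by norm_num)
    (expUB10 (by norm_num) (by norm_num) (by norm_num)) (by norm_num)
  push_cast at h
  linarith

private lemma loglo4 : (-69314769/100000000 : ℝ) < Real.log (1/2 : ℝ) := by
  have h := lt_log_of (q := 1/2) (s := 69314769/100000000) (L := 8960004530864706504993595837408651939964884658437829421597997069392358775809/4480000000000000000000000000000000000000000000000000000000000000000000000000) 1 (by norm_num)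
    (by norm_num) (expLB10 (by norm_num) (by norm_num)) (by norm_num)
  push_cast at h
  linarith

private lemma loghi5 : Real.log (1/100 : ℝ) < -92103353/20000000 := by
  have h := log_lt_of (q := 1/100) (s := 92103353/100000000) (U := 9115129302892265146319206116721256870638650729816055254217604301526700143812414105993029/3628800000000000000000000000000000000000000000000000000000000000000000000000000000000000) 5 (by norm_num)
    (expUB10 (by norm_num) (by norm_num) (by norm_num)) (by norm_num)
  push_cast at h
  linarith

private lemma loglo5 : (-46051727/10000000 : ℝ) < Real.log (1/100 : ℝ) := by
  have h := lt_log_of (q := 1/100) (s := 46051727/50000000) (L := 1780300309893787922598409026218620029613060994564549529847490417483894214287/708750000000000000000000000000000000000000000000000000000000000000000000000) 5 (by norm_num)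
    (by norm_num) (expLB10 (by norm_num) (by norm_num)) (by norm_num)
  push_cast at h
  linarith

private lemma loghi6 : Real.log (99/100 : ℝ) < -1004983/100000000 := by
  have h := log_lt_of (q := 99/100) (s := 1004983/100000000) (U := 523636098753142605038315003740409432501500286734185117937195503121457842977574972151347/518400000000000000000000000000000000000000000000000000000000000000000000000000000000000) 1 (by norm_num)
    (expUB10 (by norm_num) (by norm_num) (by norm_num)) (by norm_num)
  push_cast at h
  linarith

private lemma loglo6 : (-251271/25000000 : ℝ) < Real.log (99/100 : ℝ) := by
  have h := lt_log_of (q := 99/100) (s := 251271/25000000) (L := 17262477137158645746494933684059325270372974576012842364174258994337751/17089843750000000000000000000000000000000000000000000000000000000000000) 1 (by norm_num)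
    (by norm_num) (expLB10 (by norm_num) (by norm_num)) (by norm_num)
  push_cast at h
  linarith

private lemma loghi7 : Real.log (297/700 : ℝ) < -85734769/100000000 := by
  have h := log_lt_of (q := 297/700) (s := 85734769/100000000) (U := 8552723161014605111688221132788860452313595180002147969306705493317048670393482480728821/3628800000000000000000000000000000000000000000000000000000000000000000000000000000000000) 1 (by norm_num)
    (expUB10 (by norm_num) (by norm_num) (by norm_num)) (by norm_num)
  push_cast at h
  linarith

private lemma loglo7 : (-8573487/10000000 : ℝ) < Real.log (297/700 : ℝ) := by
  have h := lt_log_of (q := 297/700) (s := 8573487/10000000) (L := 10558927590948798970047657292046963903590002588020335204263458480767/4480000000000000000000000000000000000000000000000000000000000000000) 1 (by norm_num)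
    (by norm_num) (expLB10 (by norm_num) (by norm_num)) (by norm_num)
  push_cast at h
  linarith

private lemma loghi8 : Real.log (403/700 : ℝ) < -55214327/100000000 := by
  have h := log_lt_of (q := 403/700) (s := 55214327/100000000) (U := 900446197506456033473571097053554427830355748577395936306972544741132419422545645856947/518400000000000000000000000000000000000000000000000000000000000000000000000000000000000) 1 (by norm_num)
    (expUB10 (by norm_num) (by norm_num) (by norm_num)) (by norm_num)
  push_cast at h
  linarith

private lemma loglo8 : (-13803607/25000000 : ℝ) < Real.log (403/700 : ℝ) := by
  have h := lt_log_of (q := 403/700) (s := 13803607/25000000) (L := 2404453179616095368160704387748859998717915098285758213829558158527186007/1384277343750000000000000000000000000000000000000000000000000000000000000) 1 (by norm_num)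
    (by norm_num) (expLB10 (by norm_num) (by norm_num)) (by norm_num)
  push_cast at h
  linarith

private lemma loghi9 : Real.log (23/50 : ℝ) < -19413207/25000000 := by
  have h := log_lt_of (q := 23/50) (s := 19413207/25000000) (U := 92879539237440826077689649906671777050756305003826560157484630343661954957103509/42724609375000000000000000000000000000000000000000000000000000000000000000000000) 1 (by norm_num)
    (expUB10 (by norm_num) (by norm_num) (by norm_num)) (by norm_num)
  push_cast at h
  linarith

private lemma loglo9 : (-77652929/100000000 : ℝ) < Real.log (23/50 : ℝ) := by
  have h := lt_log_of (q := 23/50) (s := 77652929/100000000) (L := 788869951473787692056640930667490319154810361735331487314389720367318807947969/362880000000000000000000000000000000000000000000000000000000000000000000000000) 1 (by norm_num)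
    (by norm_num) (expLB10 (by norm_num) (by norm_num)) (by norm_num)
  push_cast at h
  linarith

private lemma loghi10 : Real.log (27/50 : ℝ) < -61618563/100000000 := by
  have h := log_lt_of (q := 27/50) (s := 61618563/100000000) (U := 82962920801071109867558494355598621873737634239923707336197008237183527158403935484109/44800000000000000000000000000000000000000000000000000000000000000000000000000000000000) 1 (by norm_num)
    (expUB10 (by norm_num) (by norm_num) (by norm_num)) (by norm_num)
  push_cast at h
  linarith

private lemma loglo10 : (-7702333/12500000 : ℝ) < Real.log (27/50 : ℝ) := by
  have h := lt_log_of (q := 27/50) (s := 7702333/12500000) (L := 5006792661187140068322808385291475193676376698813898270948217807670653/2703666687011718750000000000000000000000000000000000000000000000000000) 1 (by norm_num)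
    (by norm_num) (expLB10 (by norm_num) (by norm_num)) (by norm_num)
  push_cast at h
  linarith

private lemma loghi11 : Real.log (201/500 : ℝ) < -91130269/100000000 := by
  have h := log_lt_of (q := 201/500) (s := 91130269/100000000) (U := 9026861554063873754635484623661004350564363386468532121239308330706486107501813303073821/3628800000000000000000000000000000000000000000000000000000000000000000000000000000000000) 1 (by norm_num)
    (expUB10 (by norm_num) (by norm_num) (by norm_num)) (by norm_num)
  push_cast at h
  linarith

private lemma loglo11 : (-9113037/10000000 : ℝ) < Real.log (201/500 : ℝ) := by
  have h := lt_log_of (q := 201/500) (s := 9113037/10000000) (L := 11144283755107684917165559196320406955005746245864886404681442474717/4480000000000000000000000000000000000000000000000000000000000000000) 1 (by norm_num)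
    (by norm_num) (expLB10 (by norm_num) (by norm_num)) (by norm_num)
  push_cast at h
  linarith

private lemma loghi12 : Real.log (299/500 : ℝ) < -25708201/50000000 := by
  have h := log_lt_of (q := 299/500) (s := 25708201/50000000) (U := 5926000352989505890967137546282104896426796581606742835014336977402098989005900522021/3543750000000000000000000000000000000000000000000000000000000000000000000000000000000) 1 (by norm_num)
    (expUB10 (by norm_num) (by norm_num) (by norm_num)) (by norm_num)
  push_cast at h
  linarith

private lemma loglo12 : (-51416503/100000000 : ℝ) < Real.log (299/500 : ℝ) := by
  have h := lt_log_of (q := 299/500) (s := 51416503/100000000) (L := 606823048765926058065935154439209827662271431948632653342863818411005679928183/362880000000000000000000000000000000000000000000000000000000000000000000000000) 1 (by norm_num)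
    (by norm_num) (expLB10 (by norm_num) (by norm_num)) (by norm_num)
  push_cast at h
  linarith

private lemma loghi13 : Real.log (1697/3500 : ℝ) < -2262189/3125000 := by
  have h := log_lt_of (q := 1697/3500) (s := 2262189/3125000) (U := 82066179741180139961270430136342568162833057998789907161398373833387341/39790393202565610408782958984375000000000000000000000000000000000000000) 1 (by norm_num)
    (expUB10 (by norm_num) (by norm_num) (by norm_num)) (by norm_num)
  push_cast at h
  linarith

private lemma loglo13 : (-72390149/100000000 : ℝ) < Real.log (1697/3500 : ℝ) := by
  have h := lt_log_of (q := 1697/3500) (s := 72390149/100000000) (L := 748427011028935388526126138679114032621934607412343909585934772983850059701349/362880000000000000000000000000000000000000000000000000000000000000000000000000) 1 (by norm_num)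
    (by norm_num) (expLB10 (by norm_num) (by norm_num)) (by norm_num)
  push_cast at h
  linarith

private lemma loghi14 : Real.log (1803/3500 : ℝ) < -16582763/25000000 := by
  have h := log_lt_of (q := 1803/3500) (s := 16582763/25000000) (U := 6717926056132318915773281310599899029201087883553108800541133260306710196861698829/3460693359375000000000000000000000000000000000000000000000000000000000000000000000) 1 (by norm_num)
    (expUB10 (by norm_num) (by norm_num) (by norm_num)) (by norm_num)
  push_cast at h
  linarith

private lemma loglo14 : (-66331153/100000000 : ℝ) < Real.log (1803/3500 : ℝ) := by
  have h := lt_log_of (q := 1803/3500) (s := 66331153/100000000) (L := 100632330175886175353444909167491482843023770858595637474907160823317284023719/51840000000000000000000000000000000000000000000000000000000000000000000000000) 1 (by norm_num)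
    (by norm_num) (expLB10 (by norm_num) (by norm_num)) (by norm_num)
  push_cast at h
  linarith

private lemma loghi15 : Real.log (21/50 : ℝ) < -43375003/50000000 := by
  have h := log_lt_of (q := 21/50) (s := 43375003/50000000) (U := 1205356565072085700674697826109811683112506285810273721730639193686389279191878927147/506250000000000000000000000000000000000000000000000000000000000000000000000000000000) 1 (by norm_num)
    (expUB10 (by norm_num) (by norm_num) (by norm_num)) (by norm_num)
  push_cast at h
  linarith

private lemma loglo15 : (-86750107/100000000 : ℝ) < Real.log (21/50 : ℝ) := by
  have h := lt_log_of (q := 21/50) (s := 86750107/100000000) (L := 864000407794278760217918667448796507971768755926128021405769228804959500904507/362880000000000000000000000000000000000000000000000000000000000000000000000000) 1 (by norm_num)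
    (by norm_num) (expLB10 (by norm_num) (by norm_num)) (by norm_num)
  push_cast at h
  linarith

private lemma loghi16 : Real.log (29/50 : ℝ) < -54472667/100000000 := by
  have h := log_lt_of (q := 29/50) (s := 54472667/100000000) (U := 6256548564227797635598354112505503571998123853547701284603748079998112715723715153152429/3628800000000000000000000000000000000000000000000000000000000000000000000000000000000000) 1 (by norm_num)
    (expUB10 (by norm_num) (by norm_num) (by norm_num)) (by norm_num)
  push_cast at h
  linarith

private lemma loglo16 : (-851137/1562500 : ℝ) < Real.log (29/50 : ℝ) := by
  have h := lt_log_of (q := 29/50) (s := 851137/1562500) (L := 4961550914969620892665919119838204331583532580500715228972211/2877698079828405752778053283691406250000000000000000000000000) 1 (by norm_num)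
    (by norm_num) (expLB10 (by norm_num) (by norm_num)) (by norm_num)
  push_cast at h
  linarith

/-- Remark 4: entropy gain is not noise-tolerant. With entropy `H(x) = -x ln x - (1-x) ln(1-x)`
and entropy gain `H(p) - a·H(p_l) - (1-a)·H(p_r)`, for parent fraction `p = 3/10`,
splits `f₁ = (1/2, 1/10, 1/2)` and `f₂ = (3/10, 1/100, 297/700)`, and noise rate
`η = 2/5` (with `x^η = (1-2η)x + η`), the entropy gain of `f₁` is strictly less than
that of `f₂` on noise-free fractions, but strictly greater on noisy fractions. -/
theorem entropy_gain_not_noise_tolerant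
    (H : ℝ → ℝ) (hH : ∀ x, H x = -(x * Real.log x) - (1 - x) * Real.log (1 - x))
    (gain : ℝ → ℝ → ℝ → ℝ → ℝ)
    (hgain : ∀ p a pl pr, gain p a pl pr = H p - a * H pl - (1 - a) * H pr)
    (η : ℝ) (hη : η = 2/5)
    (noisy : ℝ → ℝ) (hnoisy : ∀ x, noisy x = (1 - 2*η)*x + η) :
    gain (3/10) (1/2) (1/10) (1/2) < gain (3/10) (3/10) (1/100) (297/700) ∧
    gain (noisy (3/10)) (3/10) (noisy (1/100)) (noisy (297/700)) <
      gain (noisy (3/10)) (1/2) (noisy (1/10)) (noisy (1/2)) := by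
  simp only [hnoisy, hη, hgain, hH]
  norm_num
  constructor
  · nlinarith [loghi0, loglo0, loghi1, loglo1, loghi2, loglo2, loghi3, loglo3, loghi4, loglo4, loghi5, loglo5, loghi6, loglo6, loghi7, loglo7, loghi8, loglo8]
  · nlinarith [loghi9, loglo9, loghi10, loglo10, loghi4, loglo4, loghi11, loglo11, loghi12, loglo12, loghi13, loglo13, loghi14, loglo14, loghi15, loglo15, loghi16, loglo16]
end
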